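/- Induction step of multi-step symbolic bounds: assume (i) x_k is linearly bounded in terms of (x_{k-n}, u_{k-n}, …, u_{k-1}): L_n [x_{k-n}; u_{k-n}; …; u_{k-1}] + c_n ≤ x_k ≤ U_n [x_{k-n}; …; u_{k-1}] + d_n componentwise, and (ii) x_{k-n} is linearly bounded in terms of (x_{k-n-1}, u_{k-n-1}): L' [x_{k-n-1}; u_{k-n-1}] + c' ≤ x_{k-n} ≤ U' [x_{k-n-1}; u_{k-n-1}] + d'. Then x_k is linearly bounded in terms of (x_{k-n-1}, u_{k-n-1}, …, u_{k-1}) with lower weight matrix (L_n)_+ · blockdiag(L', I) + (L_n)_- · blockdiag(U', I), lower bias c_n + (L_n)_+ [c'; 0] + (L_n)_- [d'; 0], and symmetrically for the upper bound with (U_n)_+ · blockdiag(U', I) + (U_n)_- · blockdiag(L', I) and bias d_n + (U_n)_+ [d'; 0] + (U_n)_- [c'; 0]. -/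

import Mathlib

open Matrix

/-- Entrywise positive part of a matrix. -/
def matPos {ι κ : Type*} (W : Matrix ι κ ℝ) : Matrix ι κ ℝ :=
  Matrix.of fun i j => max (W i j) 0

/-- Entrywise negative part of a matrix. -/
def matNeg {ι κ : Type*} (W : Matrix ι κ ℝ) : Matrix ι κ ℝ :=
  Matrix.of fun i j => min (W i j) 0

lemma sandwich_mulVec {ι κ : Type*} [Fintype κ] (W : Matrix ι κ ℝ) (a y b : κ → ℝ)
    (ha : a ≤ y) (hb : y ≤ b) :
    (matPos W).mulVec a + (matNeg W).mulVec b ≤ W.mulVec y ∧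
    W.mulVec y ≤ (matPos W).mulVec b + (matNeg W).mulVec a := by
  constructor <;> intro i <;>
      simp only [Pi.add_apply, mulVec, dotProduct, matPos, matNeg, Matrix.of_apply,
        ← Finset.sum_add_distrib] <;>
      refine Finset.sum_le_sum fun j _ => ?_ <;>
      rcases le_total (W i j) 0 with h | h <;>
      simp only [max_eq_right h, max_eq_left h, min_eq_left h, min_eq_right h,
        zero_mul, add_zero, zero_add] <;>
      first
        | exact mul_le_mul_of_nonpos_left (hb j) h
        | exact mul_le_mul_of_nonneg_left (ha j) h
        | exact mul_le_mul_of_nonpos_left (ha j) h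
        | exact mul_le_mul_of_nonneg_left (hb j) h

/-- Induction step of the multi-step symbolic bounds (Theorem 1 recursion):
composing the `n`-step bound on `x_k` in terms of `(x_{k−n}, u_{k−n}, …, u_{k−1})`
with the one-step bound on `x_{k−n}` in terms of `(x_{k−n−1}, u_{k−n−1})`. -/
theorem multistep_symbolic_bound_step {m p q r : ℕ}
    (Ln Un : Matrix (Fin m) (Fin p ⊕ Fin q) ℝ) (cn dn : Fin m → ℝ)
    (L' U' : Matrix (Fin p) (Fin r) ℝ) (c' d' : Fin p → ℝ)
    (xk : Fin m → ℝ) (xkn : Fin p → ℝ) (uvec : Fin q → ℝ) (v : Fin r → ℝ)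
    (h1l : Ln.mulVec (Sum.elim xkn uvec) + cn ≤ xk)
    (h1u : xk ≤ Un.mulVec (Sum.elim xkn uvec) + dn)
    (h2l : L'.mulVec v + c' ≤ xkn)
    (h2u : xkn ≤ U'.mulVec v + d') :
    ((matPos Ln) * Matrix.fromBlocks L' 0 0 1
        + (matNeg Ln) * Matrix.fromBlocks U' 0 0 1).mulVec
          (Sum.elim v uvec)
      + (cn + (matPos Ln).mulVec (Sum.elim c' 0)
            + (matNeg Ln).mulVec (Sum.elim d' 0)) ≤ xk ∧
    xk ≤ ((matPos Un) * Matrix.fromBlocks U' 0 0 1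
        + (matNeg Un) * Matrix.fromBlocks L' 0 0 1).mulVec
          (Sum.elim v uvec)
      + (dn + (matPos Un).mulVec (Sum.elim d' 0)
            + (matNeg Un).mulVec (Sum.elim c' 0)) := by
  set a : Fin p ⊕ Fin q → ℝ := Sum.elim (L'.mulVec v + c') uvec with ha'
  set b : Fin p ⊕ Fin q → ℝ := Sum.elim (U'.mulVec v + d') uvec with hb'
  set y : Fin p ⊕ Fin q → ℝ := Sum.elim xkn uvec with hy'
  have hay : a ≤ y := by
    rintro (k | k)
    · exact h2l k
    · exact le_rfl
  have hyb : y ≤ b := by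
    rintro (k | k)
    · exact h2u k
    · exact le_rfl
  have key : ∀ (W : Matrix (Fin m) (Fin p ⊕ Fin q) ℝ) (A : Matrix (Fin p) (Fin r) ℝ)
      (c : Fin p → ℝ),
      (W * Matrix.fromBlocks A 0 0 1).mulVec (Sum.elim v uvec) + W.mulVec (Sum.elim c 0)
        = W.mulVec (Sum.elim (A.mulVec v + c) uvec) := by
    intro W A c
    erw [← Matrix.mulVec_mulVec]
    rw [Matrix.fromBlocks_mulVec, ← Matrix.mulVec_add]
    refine congrArg W.mulVec ?_
    funext j
    cases j <;> simp [Matrix.mulVec]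
  have sL := sandwich_mulVec Ln a y b hay hyb
  have sU := sandwich_mulVec Un a y b hay hyb
  constructor
  · have : ((matPos Ln) * Matrix.fromBlocks L' 0 0 1
        + (matNeg Ln) * Matrix.fromBlocks U' 0 0 1).mulVec (Sum.elim v uvec)
      + (cn + (matPos Ln).mulVec (Sum.elim c' 0) + (matNeg Ln).mulVec (Sum.elim d' 0))
      = ((matPos Ln).mulVec a + (matNeg Ln).mulVec b) + cn := by
      erw [Matrix.add_mulVec]
      rw [ha', hb', ← key (matPos Ln) L' c', ← key (matNeg Ln) U' d']
      abel
    rw [this]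
    calc (matPos Ln).mulVec a + (matNeg Ln).mulVec b + cn
        ≤ Ln.mulVec y + cn := add_le_add_left sL.1 cn
      _ ≤ xk := h1l
  · have : ((matPos Un) * Matrix.fromBlocks U' 0 0 1
        + (matNeg Un) * Matrix.fromBlocks L' 0 0 1).mulVec (Sum.elim v uvec)
      + (dn + (matPos Un).mulVec (Sum.elim d' 0) + (matNeg Un).mulVec (Sum.elim c' 0))
      = ((matPos Un).mulVec b + (matNeg Un).mulVec a) + dn := by
      erw [Matrix.add_mulVec]
      rw [ha', hb', ← key (matPos Un) U' d', ← key (matNeg Un) L' c']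
      abel
    rw [this]
    calc xk ≤ Un.mulVec y + dn := h1u
      _ ≤ (matPos Un).mulVec b + (matNeg Un).mulVec a + dn := add_le_add_left sU.2 dn
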